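/- Marginal likelihood of counts under a Dirichlet prior (BDe score component): for every a : Fin k → ℝ with a i > 0 for all i and every count vector N : Fin k → ℕ, the Dirichlet-type integrals satisfy I(fun i => a i + N i) = I(a) · (Γ(Σ_i a i) / Γ(Σ_i a i + Σ_i N i)) · ∏_i (Γ(a i + N i) / Γ(a i)), where Γ is the real Gamma function. Equivalently, the probability of observing a sequence of outcomes with counts N under a Dirichlet prior with hyperparameters a equals Γ(Σ a_i)/Γ(Σ(a_i + N_i)) · ∏_i Γ(a_i + N_i)/Γ(a_i). -/

import Mathlib

open Finset MeasureTheory Real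

lemma realBeta_integrable {b d : ℝ} (hb : 0 < b) (hd : 0 < d) :
    IntervalIntegrable (fun t : ℝ => t ^ (b - 1) * (1 - t) ^ (d - 1)) volume 0 1 := by
  have hc : IntervalIntegrable
      (fun x : ℝ => (x : ℂ) ^ ((b : ℂ) - 1) * ((1 : ℂ) - x) ^ ((d : ℂ) - 1)) volume 0 1 :=
    Complex.betaIntegral_convergent (by simpa using hb) (by simpa using hd)
  have heq : ∀ x ∈ Set.uIoc (0 : ℝ) 1,
      (fun x : ℝ => (x : ℂ) ^ ((b : ℂ) - 1) * ((1 : ℂ) - x) ^ ((d : ℂ) - 1)) x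
        = ((x ^ (b - 1) * (1 - x) ^ (d - 1) : ℝ) : ℂ) := by
    intro x hx
    rw [Set.uIoc_of_le zero_le_one] at hx
    have h0 : (0:ℝ) ≤ x := hx.1.le
    have h1 : (0:ℝ) ≤ 1 - x := by linarith [hx.2]
    rw [Complex.ofReal_mul, Complex.ofReal_cpow h0, Complex.ofReal_cpow h1]
    push_cast
    ring
  have hc2 : IntervalIntegrable
      (fun x : ℝ => ((x ^ (b - 1) * (1 - x) ^ (d - 1) : ℝ) : ℂ)) volume 0 1 := by
    rw [intervalIntegrable_iff] at hc ⊢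
    exact hc.congr_fun (fun x hx => heq x hx) measurableSet_uIoc
  have := hc2.1
  rw [intervalIntegrable_iff] at hc2 ⊢
  have h := hc2.re
  simp at h
  rw [Set.uIoc_of_le zero_le_one]
  exact h

lemma realBeta_eval {b d : ℝ} (hb : 0 < b) (hd : 0 < d) :
    ∫ t in (0:ℝ)..1, t ^ (b - 1) * (1 - t) ^ (d - 1)
      = Real.Gamma b * Real.Gamma d / Real.Gamma (b + d) := by
  have key := Complex.Gamma_mul_Gamma_eq_betaIntegral (s := (b:ℂ)) (t := (d:ℂ))
    (by simpa using hb) (by simpa using hd)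
  have hβ : Complex.betaIntegral b d
      = ((∫ t in (0:ℝ)..1, t ^ (b - 1) * (1 - t) ^ (d - 1) : ℝ) : ℂ) := by
    rw [Complex.betaIntegral, ← intervalIntegral.integral_ofReal]
    refine intervalIntegral.integral_congr fun x hx => ?_
    rw [Set.uIcc_of_le zero_le_one] at hx
    have h0 : (0:ℝ) ≤ x := hx.1
    have h1 : (0:ℝ) ≤ 1 - x := by linarith [hx.2]
    rw [Complex.ofReal_mul, Complex.ofReal_cpow h0, Complex.ofReal_cpow h1]
    push_cast
    ring
  rw [hβ, ← Complex.ofReal_add, Complex.Gamma_ofReal, Complex.Gamma_ofReal,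
    Complex.Gamma_ofReal, ← Complex.ofReal_mul, ← Complex.ofReal_mul] at key
  have := Complex.ofReal_inj.mp key
  have hΓ : Real.Gamma (b + d) ≠ 0 := (Real.Gamma_pos_of_pos (by linarith)).ne'
  field_simp
  linarith [this]

lemma scaledBeta_integrable {b d c : ℝ} (hb : 0 < b) (hd : 0 < d) (hc : 0 < c) :
    IntervalIntegrable (fun t : ℝ => t ^ (b - 1) * (c - t) ^ (d - 1)) volume 0 c := by
  have h1 := (realBeta_integrable hb hd).comp_mul_left (c := c⁻¹)
  simp only [div_inv_eq_mul, zero_mul, one_mul] at h1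
  have h2 := (h1.const_mul (c ^ (b - 1) * c ^ (d - 1)))
  rw [intervalIntegrable_iff] at h2 ⊢
  refine h2.congr_fun (fun x hx => ?_) measurableSet_uIoc
  rw [Set.uIoc_of_le hc.le] at hx
  have hx0 : (0:ℝ) ≤ c⁻¹ * x := mul_nonneg (inv_nonneg.2 hc.le) hx.1.le
  have hx1 : (0:ℝ) ≤ 1 - c⁻¹ * x := by
    rw [sub_nonneg, inv_mul_le_iff₀ hc, mul_one]; exact hx.2
  have e1 : c ^ (b - 1) * (c⁻¹ * x) ^ (b - 1) = x ^ (b - 1) := by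
    rw [← Real.mul_rpow hc.le hx0, mul_inv_cancel_left₀ hc.ne']
  have e2 : c ^ (d - 1) * (1 - c⁻¹ * x) ^ (d - 1) = (c - x) ^ (d - 1) := by
    rw [← Real.mul_rpow hc.le hx1, mul_sub, mul_one, mul_inv_cancel_left₀ hc.ne']
  calc c ^ (b - 1) * c ^ (d - 1) * ((c⁻¹ * x) ^ (b - 1) * (1 - c⁻¹ * x) ^ (d - 1))
      = (c ^ (b - 1) * (c⁻¹ * x) ^ (b - 1)) * (c ^ (d - 1) * (1 - c⁻¹ * x) ^ (d - 1)) := by ring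
    _ = x ^ (b - 1) * (c - x) ^ (d - 1) := by rw [e1, e2]

lemma scaledBeta_eval {b d c : ℝ} (hb : 0 < b) (hd : 0 < d) (hc : 0 < c) :
    ∫ t in (0:ℝ)..c, t ^ (b - 1) * (c - t) ^ (d - 1)
      = c ^ (b + d - 1) * (Real.Gamma b * Real.Gamma d / Real.Gamma (b + d)) := by
  have hsub := intervalIntegral.integral_comp_mul_left (a := (0:ℝ)) (b := (1:ℝ))
    (fun t : ℝ => t ^ (b - 1) * (c - t) ^ (d - 1)) (c := c) hc.ne'
  simp only [mul_zero, mul_one] at hsub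
  have congr1 : ∫ x in (0:ℝ)..1, (c * x) ^ (b - 1) * (c - c * x) ^ (d - 1)
      = ∫ x in (0:ℝ)..1, (c ^ (b - 1) * c ^ (d - 1)) * (x ^ (b - 1) * (1 - x) ^ (d - 1)) := by
    refine intervalIntegral.integral_congr fun x hx => ?_
    rw [Set.uIcc_of_le zero_le_one] at hx
    have hx0 : (0:ℝ) ≤ x := hx.1
    have hx1 : (0:ℝ) ≤ 1 - x := by linarith [hx.2]
    rw [Real.mul_rpow hc.le hx0, show c - c * x = c * (1 - x) by ring,
      Real.mul_rpow hc.le hx1]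
    ring
  rw [congr1, intervalIntegral.integral_const_mul, realBeta_eval hb hd, smul_eq_mul] at hsub
  have hpow : c * (c ^ (b - 1) * c ^ (d - 1)) = c ^ (b + d - 1) := by
    nth_rewrite 1 [← Real.rpow_one c]
    rw [← Real.rpow_add hc, ← Real.rpow_add hc]
    ring_nf
  have hI : c * (c ^ (b - 1) * c ^ (d - 1) * (Real.Gamma b * Real.Gamma d / Real.Gamma (b + d)))
      = ∫ t in (0:ℝ)..c, t ^ (b - 1) * (c - t) ^ (d - 1) := by
    rw [hsub, ← mul_assoc, mul_inv_cancel₀ hc.ne', one_mul]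
  rw [← hI, ← hpow]
  ring

lemma beta_Ioo {b d : ℝ} (hb : 0 < b) (hd : 0 < d) {c : ℝ} (hc : 0 < c) :
    ∫⁻ t in Set.Ioo 0 c, ENNReal.ofReal (t ^ (b - 1) * (c - t) ^ (d - 1))
      = ENNReal.ofReal (c ^ (b + d - 1) * (Real.Gamma b * Real.Gamma d / Real.Gamma (b + d))) := by
  have hint : IntegrableOn (fun t : ℝ => t ^ (b - 1) * (c - t) ^ (d - 1)) (Set.Ioo 0 c) := by
    have h := scaledBeta_integrable hb hd hc
    rw [intervalIntegrable_iff, Set.uIoc_of_le hc.le] at h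
    exact h.mono_set Set.Ioo_subset_Ioc_self
  have hnn : 0 ≤ᵐ[volume.restrict (Set.Ioo 0 c)]
      fun t : ℝ => t ^ (b - 1) * (c - t) ^ (d - 1) := by
    filter_upwards [ae_restrict_mem measurableSet_Ioo] with t ht
    exact mul_nonneg (Real.rpow_nonneg ht.1.le _) (Real.rpow_nonneg (by linarith [ht.2]) _)
  rw [← ofReal_integral_eq_lintegral_ofReal hint hnn, ← integral_Ioc_eq_integral_Ioo,
    ← intervalIntegral.integral_of_le hc.le, scaledBeta_eval hb hd hc]

lemma measurableSet_simplex (n : ℕ) :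
    MeasurableSet {θ : Fin n → ℝ | (∀ i, 0 < θ i) ∧ ∑ i, θ i < 1} := by
  have h1 : MeasurableSet {θ : Fin n → ℝ | ∀ i, 0 < θ i} := by
    have he : {θ : Fin n → ℝ | ∀ i, 0 < θ i} = ⋂ i, {θ | 0 < θ i} := by ext; simp
    rw [he]
    exact MeasurableSet.iInter fun i =>
      measurableSet_lt measurable_const (measurable_pi_apply i)
  have h2 : MeasurableSet {θ : Fin n → ℝ | ∑ i, θ i < 1} :=
    measurableSet_lt (Finset.measurable_sum _ fun i _ => measurable_pi_apply i) measurable_const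
  exact h1.inter h2

lemma dirichlet_lintegral (m : ℕ) : ∀ (a : Fin (m + 2) → ℝ), (∀ i, 0 < a i) →
    (∫⁻ θ in {θ : Fin (m + 1) → ℝ | (∀ i, 0 < θ i) ∧ ∑ i, θ i < 1},
      ENNReal.ofReal ((∏ i : Fin (m + 1), θ i ^ (a i.castSucc - 1)) *
        (1 - ∑ i, θ i) ^ (a (Fin.last (m + 1)) - 1)))
      = ENNReal.ofReal ((∏ i, Real.Gamma (a i)) / Real.Gamma (∑ i, a i)) := by
  induction m with
  | zero =>
    intro a ha
    have hmp := (volume_preserving_funUnique (Fin 1) ℝ).symm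
    show ∫⁻ θ in {θ : Fin 1 → ℝ | (∀ i, 0 < θ i) ∧ ∑ i, θ i < 1}, ENNReal.ofReal ((∏ i : Fin 1, θ i ^ (a i.castSucc - 1)) * (1 - ∑ i, θ i) ^ (a (Fin.last 1) - 1)) = ENNReal.ofReal ((∏ i, Real.Gamma (a i)) / Real.Gamma (∑ i, a i))
    refine Eq.trans (hmp.setLIntegral_comp_preimage_emb (MeasurableEquiv.measurableEmbedding _)
      (fun θ : Fin 1 → ℝ => ENNReal.ofReal ((∏ i : Fin 1, θ i ^ (a i.castSucc - 1)) *
        (1 - ∑ i, θ i) ^ (a (Fin.last 1) - 1)))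
      {θ : Fin 1 → ℝ | (∀ i, 0 < θ i) ∧ ∑ i, θ i < 1}).symm ?_
    have hset : (⇑(MeasurableEquiv.funUnique (Fin 1) ℝ).symm) ⁻¹'
        {θ : Fin 1 → ℝ | (∀ i, 0 < θ i) ∧ ∑ i, θ i < 1} = Set.Ioo 0 1 := by
      ext t
      simp [MeasurableEquiv.funUnique, Set.mem_Ioo, Fin.forall_fin_one]
    rw [hset]
    have hfe : ∀ (t : ℝ) (i : Fin 1), (MeasurableEquiv.funUnique (Fin 1) ℝ).symm t i = t :=
      fun t i => rfl
    simp only [hfe, Fin.sum_univ_one, Fin.prod_univ_one]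
    have h01 : ((0 : Fin 1).castSucc : Fin 2) = 0 := rfl
    have h11 : (Fin.last 1 : Fin 2) = 1 := rfl
    rw [h01, h11, beta_Ioo (ha 0) (ha 1) one_pos]
    rw [Real.one_rpow, one_mul, Fin.prod_univ_two, Fin.sum_univ_two]
  | succ m ih =>
    intro a ha
    set i0 : Fin (m + 2) := Fin.last (m + 1) with hi0
    set b := a i0.castSucc with hbdef
    set d := a (Fin.last (m + 2)) with hddef
    have hbp : 0 < b := ha _
    have hdp : 0 < d := ha _
    set K := Real.Gamma b * Real.Gamma d / Real.Gamma (b + d) with hKdef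
    have hKnn : 0 ≤ K := by
      have g1 := Real.Gamma_pos_of_pos hbp
      have g2 := Real.Gamma_pos_of_pos hdp
      have g3 := Real.Gamma_pos_of_pos (show (0:ℝ) < b + d by linarith)
      positivity
    set a' : Fin (m + 2) → ℝ :=
      Fin.snoc (fun j : Fin (m + 1) => a j.castSucc.castSucc) (b + d) with ha'def
    have ha'cast : ∀ j : Fin (m + 1), a' j.castSucc = a j.castSucc.castSucc := by
      intro j; rw [ha'def, Fin.snoc_castSucc]
    have ha'last : a' (Fin.last (m + 1)) = b + d := by rw [ha'def, Fin.snoc_last]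
    have ha'pos : ∀ j, 0 < a' j := by
      intro j
      refine Fin.lastCases ?_ ?_ j
      · rw [ha'last]; linarith
      · intro j; rw [ha'cast]; exact ha _
    have hmp := (volume_preserving_piFinSuccAbove (fun _ : Fin (m + 2) => ℝ) i0).symm
    rw [← hmp.setLIntegral_comp_preimage_emb (MeasurableEquiv.measurableEmbedding _)
      (fun θ : Fin (m + 2) → ℝ =>
        ENNReal.ofReal ((∏ i : Fin (m + 2), θ i ^ (a i.castSucc - 1)) *
          (1 - ∑ i, θ i) ^ (a (Fin.last (m + 2)) - 1)))
      {θ : Fin (m + 2) → ℝ | (∀ i, 0 < θ i) ∧ ∑ i, θ i < 1}]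
    set T : Set (ℝ × (Fin (m + 1) → ℝ)) :=
      {p | (∀ j, 0 < p.2 j) ∧ 0 < p.1 ∧ p.1 + ∑ j, p.2 j < 1} with hTdef
    have hsymm : ∀ p : ℝ × (Fin (m + 1) → ℝ),
        (MeasurableEquiv.piFinSuccAbove (fun _ : Fin (m + 2) => ℝ) i0).symm p
          = Fin.insertNth (α := fun _ : Fin (m + 2) => ℝ) i0 p.1 p.2 := fun p => rfl
    have hkey : ∀ (t : ℝ) (φ : Fin (m + 1) → ℝ),
        ∑ i : Fin (m + 2), Fin.insertNth (α := fun _ : Fin (m + 2) => ℝ) i0 t φ i = t + ∑ j, φ j := by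
      intro t φ
      rw [Fin.sum_univ_succAbove (fun i => Fin.insertNth (α := fun _ : Fin (m + 2) => ℝ) i0 t φ i) i0]
      simp [Fin.insertNth_apply_same, Fin.insertNth_apply_succAbove]
    have hforall : ∀ (t : ℝ) (φ : Fin (m + 1) → ℝ),
        (∀ i : Fin (m + 2), 0 < Fin.insertNth (α := fun _ : Fin (m + 2) => ℝ) i0 t φ i) ↔ (0 < t ∧ ∀ j, 0 < φ j) := by
      intro t φ
      constructor
      · intro h
        refine ⟨?_, fun j => ?_⟩
        · simpa [Fin.insertNth_apply_same] using h i0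
        · simpa [Fin.insertNth_apply_succAbove] using h (i0.succAbove j)
      · rintro ⟨h1, h2⟩ i
        refine i0.succAboveCases ?_ ?_ i
        · simpa [Fin.insertNth_apply_same] using h1
        · intro j
          simpa [Fin.insertNth_apply_succAbove] using h2 j
    have hT : (⇑(MeasurableEquiv.piFinSuccAbove (fun _ : Fin (m + 2) => ℝ) i0).symm) ⁻¹'
        {θ : Fin (m + 2) → ℝ | (∀ i, 0 < θ i) ∧ ∑ i, θ i < 1} = T := by
      ext ⟨t, φ⟩
      simp only [Set.mem_preimage, hsymm, Set.mem_setOf_eq, hTdef]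
      rw [hforall, hkey]
      tauto
    rw [hT]
    have hFg : ∀ (t : ℝ) (φ : Fin (m + 1) → ℝ),
        ((∏ i : Fin (m + 2), (Fin.insertNth (α := fun _ : Fin (m + 2) => ℝ) i0 t φ) i ^ (a i.castSucc - 1)) *
          (1 - ∑ i, (Fin.insertNth (α := fun _ : Fin (m + 2) => ℝ) i0 t φ) i) ^ (a (Fin.last (m + 2)) - 1))
        = ((∏ j : Fin (m + 1), φ j ^ (a' j.castSucc - 1)) *
            (t ^ (b - 1) * ((1 - ∑ j, φ j) - t) ^ (d - 1))) := by
      intro t φ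
      rw [Fin.prod_univ_succAbove (fun i => (Fin.insertNth (α := fun _ : Fin (m + 2) => ℝ) i0 t φ) i ^ (a i.castSucc - 1)) i0,
        hkey]
      simp only [Fin.insertNth_apply_same, Fin.insertNth_apply_succAbove]
      rw [show (1 : ℝ) - (t + ∑ j, φ j) = (1 - ∑ j, φ j) - t from by ring]
      have : ∀ j : Fin (m + 1), a (i0.succAbove j).castSucc = a' j.castSucc := by
        intro j; rw [ha'cast, hi0, Fin.succAbove_last]
      simp_rw [this]
      rw [← hbdef, ← hddef]
      ring
    have hTm : MeasurableSet T := by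
      rw [hTdef]
      have h1 : MeasurableSet {p : ℝ × (Fin (m + 1) → ℝ) | ∀ j, 0 < p.2 j} := by
        have he : {p : ℝ × (Fin (m + 1) → ℝ) | ∀ j, 0 < p.2 j}
            = ⋂ j, {p | 0 < p.2 j} := by ext; simp
        rw [he]
        exact MeasurableSet.iInter fun j =>
          measurableSet_lt measurable_const (by fun_prop)
      have h2 : MeasurableSet {p : ℝ × (Fin (m + 1) → ℝ) | 0 < p.1 ∧ p.1 + ∑ j, p.2 j < 1} := by
        have hsum_meas : Measurable fun p : ℝ × (Fin (m + 1) → ℝ) => p.1 + ∑ j, p.2 j :=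
          measurable_fst.add (Finset.measurable_sum Finset.univ
            (fun j _ => (measurable_pi_apply j).comp measurable_snd))
        exact (measurableSet_lt measurable_const measurable_fst).inter
          (measurableSet_lt hsum_meas measurable_const)
      exact h1.inter h2
    have hFmeas : Measurable (fun θ : Fin (m + 2) → ℝ =>
        ENNReal.ofReal ((∏ i : Fin (m + 2), θ i ^ (a i.castSucc - 1)) *
          (1 - ∑ i, θ i) ^ (a (Fin.last (m + 2)) - 1))) := by fun_prop
    have hmeas2 : Measurable (fun p : ℝ × (Fin (m + 1) → ℝ) =>
        ENNReal.ofReal ((∏ i : Fin (m + 2),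
            ((MeasurableEquiv.piFinSuccAbove (fun _ : Fin (m + 2) => ℝ) i0).symm p) i
              ^ (a i.castSucc - 1)) *
          (1 - ∑ i, ((MeasurableEquiv.piFinSuccAbove (fun _ : Fin (m + 2) => ℝ) i0).symm p) i)
            ^ (a (Fin.last (m + 2)) - 1))) :=
      hFmeas.comp (MeasurableEquiv.measurable _)
    rw [← lintegral_indicator hTm, Measure.volume_eq_prod,
      lintegral_prod_symm _ (hmeas2.indicator hTm).aemeasurable]
    have hinner : ∀ φ : Fin (m + 1) → ℝ,
        (∫⁻ t, T.indicator (fun p : ℝ × (Fin (m + 1) → ℝ) =>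
          ENNReal.ofReal ((∏ i : Fin (m + 2),
              ((MeasurableEquiv.piFinSuccAbove (fun _ : Fin (m + 2) => ℝ) i0).symm p) i
                ^ (a i.castSucc - 1)) *
            (1 - ∑ i, ((MeasurableEquiv.piFinSuccAbove (fun _ : Fin (m + 2) => ℝ) i0).symm p) i)
              ^ (a (Fin.last (m + 2)) - 1))) (t, φ))
        = Set.indicator {φ : Fin (m + 1) → ℝ | (∀ i, 0 < φ i) ∧ ∑ i, φ i < 1}
            (fun φ => ENNReal.ofReal K *
              ENNReal.ofReal ((∏ j : Fin (m + 1), φ j ^ (a' j.castSucc - 1)) *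
                (1 - ∑ j, φ j) ^ (a' (Fin.last (m + 1)) - 1))) φ := by
      intro φ
      by_cases hφ : (∀ i, 0 < φ i) ∧ ∑ i, φ i < 1
      · have hc : 0 < 1 - ∑ j, φ j := by linarith [hφ.2]
        have hCnn : 0 ≤ ∏ j : Fin (m + 1), φ j ^ (a' j.castSucc - 1) :=
          Finset.prod_nonneg fun j _ => Real.rpow_nonneg (hφ.1 j).le _
        have hind : ∀ t : ℝ, T.indicator (fun p : ℝ × (Fin (m + 1) → ℝ) =>
            ENNReal.ofReal ((∏ i : Fin (m + 2),
                ((MeasurableEquiv.piFinSuccAbove (fun _ : Fin (m + 2) => ℝ) i0).symm p) i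
                  ^ (a i.castSucc - 1)) *
              (1 - ∑ i, ((MeasurableEquiv.piFinSuccAbove (fun _ : Fin (m + 2) => ℝ) i0).symm p) i)
                ^ (a (Fin.last (m + 2)) - 1))) (t, φ)
            = Set.indicator (Set.Ioo 0 (1 - ∑ j, φ j))
                (fun t => ENNReal.ofReal ((∏ j : Fin (m + 1), φ j ^ (a' j.castSucc - 1)) *
                  (t ^ (b - 1) * ((1 - ∑ j, φ j) - t) ^ (d - 1)))) t := by
          intro t
          by_cases ht : t ∈ Set.Ioo 0 (1 - ∑ j, φ j)
          · have hmem : (t, φ) ∈ T := ⟨hφ.1, ht.1, by have := ht.2; simp only [Set.mem_Ioo] at ht; linarith [ht.2]⟩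
            rw [Set.indicator_of_mem ht, Set.indicator_of_mem hmem]
            rw [hsymm]
            exact congrArg ENNReal.ofReal (hFg t φ)
          · have hmem : (t, φ) ∉ T := by
              intro hmem
              exact ht ⟨hmem.2.1, by have := hmem.2.2; linarith⟩
            rw [Set.indicator_of_notMem ht, Set.indicator_of_notMem hmem]
        rw [lintegral_congr hind, lintegral_indicator measurableSet_Ioo,
          Set.indicator_of_mem (show φ ∈ {φ : Fin (m + 1) → ℝ | (∀ i, 0 < φ i) ∧ ∑ i, φ i < 1} from hφ)]
        simp_rw [ENNReal.ofReal_mul hCnn]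
        rw [lintegral_const_mul _ (by fun_prop), beta_Ioo hbp hdp hc, ha'last]
        rw [← ENNReal.ofReal_mul hCnn, ← ENNReal.ofReal_mul hCnn, ← ENNReal.ofReal_mul hKnn]
        congr 1
        ring
      · have hzero : ∀ t : ℝ, T.indicator (fun p : ℝ × (Fin (m + 1) → ℝ) =>
            ENNReal.ofReal ((∏ i : Fin (m + 2),
                ((MeasurableEquiv.piFinSuccAbove (fun _ : Fin (m + 2) => ℝ) i0).symm p) i
                  ^ (a i.castSucc - 1)) *
              (1 - ∑ i, ((MeasurableEquiv.piFinSuccAbove (fun _ : Fin (m + 2) => ℝ) i0).symm p) i)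
                ^ (a (Fin.last (m + 2)) - 1))) (t, φ) = 0 := by
          intro t
          apply Set.indicator_of_notMem
          intro hmem
          exact hφ ⟨hmem.1, by have h1 := hmem.2.1; have h2 := hmem.2.2; linarith⟩
        rw [lintegral_congr hzero, lintegral_zero, Set.indicator_of_notMem (show φ ∉ {φ : Fin (m + 1) → ℝ | (∀ i, 0 < φ i) ∧ ∑ i, φ i < 1} from hφ)]
    rw [lintegral_congr hinner, lintegral_indicator (measurableSet_simplex (m + 1)),
      lintegral_const_mul _ (by fun_prop), ih a' ha'pos]
    have hG : Real.Gamma (b + d) ≠ 0 := (Real.Gamma_pos_of_pos (by linarith)).ne'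
    have hsumpos : 0 < ∑ i, a i := Finset.sum_pos (fun i _ => ha i) Finset.univ_nonempty
    have hGs : Real.Gamma (∑ i, a i) ≠ 0 := (Real.Gamma_pos_of_pos hsumpos).ne'
    have hsum : ∑ j, a' j = ∑ i, a i := by
      rw [Fin.sum_univ_castSucc (f := a'), ha'last,
        Fin.sum_univ_castSucc (f := a), Fin.sum_univ_castSucc (f := fun i : Fin (m + 2) => a i.castSucc)]
      simp_rw [ha'cast]
      ring
    have hprod : ∏ j, Real.Gamma (a' j)
        = (∏ j : Fin (m + 1), Real.Gamma (a j.castSucc.castSucc)) * Real.Gamma (b + d) := by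
      rw [Fin.prod_univ_castSucc (f := fun j : Fin (m + 2) => Real.Gamma (a' j)), ha'last]
      simp_rw [ha'cast]
    have hprodA : ∏ i : Fin (m + 1 + 2), Real.Gamma (a i)
        = (∏ j : Fin (m + 1), Real.Gamma (a j.castSucc.castSucc)) * Real.Gamma b * Real.Gamma d := by
      rw [Fin.prod_univ_castSucc (f := fun i : Fin (m + 1 + 2) => Real.Gamma (a i)),
        Fin.prod_univ_castSucc (f := fun i : Fin (m + 2) => Real.Gamma (a i.castSucc))]
    rw [← ENNReal.ofReal_mul hKnn, hsum, hprod, hprodA]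
    congr 1
    rw [hKdef]
    field_simp

/-- The Dirichlet-type integral `∫_Δ ∏ θᵢ^(aᵢ-1) · (1-∑θᵢ)^(a_last - 1)` over the
open simplex `Δ = {θ : ℝ^(k-1) | θᵢ > 0, ∑ θᵢ < 1}`, for `k = m + 2` outcomes. -/
noncomputable def dirichletIntegral {m : ℕ} (a : Fin (m + 2) → ℝ) : ℝ :=
  ∫ θ in {θ : Fin (m + 1) → ℝ | (∀ i, 0 < θ i) ∧ ∑ i, θ i < 1},
    (∏ i : Fin (m + 1), θ i ^ (a i.castSucc - 1)) *
      (1 - ∑ i, θ i) ^ (a (Fin.last (m + 1)) - 1)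

lemma dirichlet_value {m : ℕ} (a : Fin (m + 2) → ℝ) (ha : ∀ i, 0 < a i) :
    dirichletIntegral a = (∏ i, Real.Gamma (a i)) / Real.Gamma (∑ i, a i) := by
  have hS := measurableSet_simplex (m + 1)
  have hnn : 0 ≤ᵐ[volume.restrict {θ : Fin (m + 1) → ℝ | (∀ i, 0 < θ i) ∧ ∑ i, θ i < 1}]
      fun θ : Fin (m + 1) → ℝ => (∏ i : Fin (m + 1), θ i ^ (a i.castSucc - 1)) *
        (1 - ∑ i, θ i) ^ (a (Fin.last (m + 1)) - 1) := by
    filter_upwards [ae_restrict_mem hS] with θ hθ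
    exact mul_nonneg (Finset.prod_nonneg fun i _ => Real.rpow_nonneg (hθ.1 i).le _)
      (Real.rpow_nonneg (by linarith [hθ.2]) _)
  have hmeas : Measurable fun θ : Fin (m + 1) → ℝ =>
      (∏ i : Fin (m + 1), θ i ^ (a i.castSucc - 1)) *
        (1 - ∑ i, θ i) ^ (a (Fin.last (m + 1)) - 1) := by fun_prop
  have hsa : 0 < ∑ i, a i := Finset.sum_pos (fun i _ => ha i) Finset.univ_nonempty
  have hv : 0 ≤ (∏ i, Real.Gamma (a i)) / Real.Gamma (∑ i, a i) :=
    div_nonneg (Finset.prod_nonneg fun i _ => (Real.Gamma_pos_of_pos (ha i)).le)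
      (Real.Gamma_pos_of_pos hsa).le
  rw [dirichletIntegral, integral_eq_lintegral_of_nonneg_ae hnn hmeas.aestronglyMeasurable,
    dirichlet_lintegral m a ha, ENNReal.toReal_ofReal hv]

/-- Marginal likelihood of counts under a Dirichlet prior (BDe score component). -/
theorem dirichlet_marginal_likelihood {m : ℕ}
    (a : Fin (m + 2) → ℝ) (ha : ∀ i, 0 < a i) (N : Fin (m + 2) → ℕ) :
    dirichletIntegral (fun i => a i + (N i : ℝ)) =
      dirichletIntegral a *
        (Real.Gamma (∑ i, a i) / Real.Gamma ((∑ i, a i) + ∑ i, (N i : ℝ))) *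
        ∏ i, (Real.Gamma (a i + (N i : ℝ)) / Real.Gamma (a i)) := by
  have haN : ∀ i, 0 < a i + (N i : ℝ) :=
    fun i => add_pos_of_pos_of_nonneg (ha i) (Nat.cast_nonneg _)
  rw [dirichlet_value _ haN, dirichlet_value a ha]
  have hsa : 0 < ∑ i, a i := Finset.sum_pos (fun i _ => ha i) Finset.univ_nonempty
  have hsN : (0:ℝ) ≤ ∑ i, (N i : ℝ) := Finset.sum_nonneg fun i _ => Nat.cast_nonneg _
  have h1 : Real.Gamma (∑ i, a i) ≠ 0 := (Real.Gamma_pos_of_pos hsa).ne'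
  have h2 : Real.Gamma ((∑ i, a i) + ∑ i, (N i : ℝ)) ≠ 0 :=
    (Real.Gamma_pos_of_pos (by linarith)).ne'
  have h4 : (∏ i, Real.Gamma (a i)) ≠ 0 :=
    Finset.prod_ne_zero_iff.2 fun i _ => (Real.Gamma_pos_of_pos (ha i)).ne'
  have hsum : (∑ i, (a i + (N i : ℝ))) = (∑ i, a i) + ∑ i, (N i : ℝ) :=
    Finset.sum_add_distrib
  rw [hsum, Finset.prod_div_distrib]
  field_simp
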